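/- arXiv:0809.0824 — 2 statements merged into one kernel-verified Lean document; each statement's English description precedes it below -/
import Mathlib

section
/- Let V be a finite-dimensional real vector space and let A be an associative subalgebra of End(V) such that every element of A has trace zero. Then every element of A is a nilpotent endomorphism. -/
open LinearMap Module Set

/-- Trace of the `k`-th power of `f` restricted to a maximal generalised eigenspace. -/
lemma trace_pow_restrict_maxGenEigenspace {K W : Type*} [Field K] [AddCommGroup W] [Module K W]
    [FiniteDimensional K W] (f : Module.End K W) (μ : K) (k : ℕ) :
    trace K _ ((f.restrict (f.mapsTo_maxGenEigenspace_of_comm rfl μ)) ^ k)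
      = μ ^ k * (finrank K (f.maxGenEigenspace μ) : K) := by
  induction k with
  | zero => simp [trace_one]
  | succ n ih =>
    have hnil : IsNilpotent
        ((f.restrict (f.mapsTo_maxGenEigenspace_of_comm rfl μ)) - algebraMap K _ μ) := by
      have heq : (f.restrict (f.mapsTo_maxGenEigenspace_of_comm rfl μ)) - algebraMap K _ μ
          = (f - algebraMap K (Module.End K W) μ).restrict
            (f.mapsTo_maxGenEigenspace_of_comm (Algebra.mul_sub_algebraMap_commutes f μ) μ) := by
        ext x
        simp [LinearMap.restrict_apply, Module.algebraMap_end_apply]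
        rfl
      rw [heq]
      exact f.isNilpotent_restrict_maxGenEigenspace_sub_algebraMap μ
    have := trace_comp_eq_mul_of_commute_of_isNilpotent (R := K)
      (M := f.maxGenEigenspace μ) μ
      (Commute.pow_left rfl n) hnil
    rw [pow_succ, Module.End.mul_eq_comp, this, ih]
    ring

/-- An endomorphism of a finite-dimensional space over an algebraically closed field of
characteristic zero, all of whose positive powers have trace zero, is nilpotent. -/
lemma isNilpotent_of_forall_trace_pow_eq_zero {K W : Type*} [Field K] [IsAlgClosed K] [CharZero K]
    [AddCommGroup W] [Module K W] [FiniteDimensional K W] (f : Module.End K W)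
    (h : ∀ k : ℕ, 0 < k → trace K W (f ^ k) = 0) : IsNilpotent f := by
  classical
  have hind := f.independent_maxGenEigenspace
  have htop := f.iSup_maxGenEigenspace_eq_top
  have hds := DirectSum.isInternal_submodule_of_iSupIndep_of_iSup_eq_top hind htop
  have hN : {μ : K | f.maxGenEigenspace μ ≠ ⊥}.Finite :=
    WellFoundedGT.finite_ne_bot_of_iSupIndep hind
  have hmt : ∀ k : ℕ, ∀ μ : K,
      MapsTo (f ^ k) (f.maxGenEigenspace μ) (f.maxGenEigenspace μ) :=
    fun k μ => f.mapsTo_maxGenEigenspace_of_comm (Commute.pow_right rfl k) μ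
  have htr : ∀ k : ℕ, 0 < k →
      ∑ μ ∈ hN.toFinset, μ ^ k * (finrank K (f.maxGenEigenspace μ) : K) = 0 := by
    intro k hk
    rw [← h k hk, trace_eq_sum_trace_restrict' hds hN (hmt k)]
    refine Finset.sum_congr rfl fun μ _ => ?_
    rw [← trace_pow_restrict_maxGenEigenspace f μ k]; exact congrArg _ (Module.End.pow_restrict k _)
  -- All eigenvalues with nonzero eigenspace are zero.
  have hzero : ∀ μ ∈ hN.toFinset, μ = 0 := by
    intro μ hμ
    set s := hN.toFinset with hs
    let e : s ≃ Fin s.card := s.equivFin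
    let g : Fin s.card → K := fun i => (e.symm i : K)
    have hg : Function.Injective g :=
      fun i j hij => e.symm.injective (Subtype.ext hij)
    let v : Fin s.card → K :=
      fun i => g i * (finrank K (f.maxGenEigenspace (g i)) : K)
    have hv : v = 0 := by
      apply Matrix.eq_zero_of_forall_pow_sum_mul_pow_eq_zero hg
      intro i
      have h1 : ∑ j : Fin s.card, v j * g j ^ (i : ℕ)
          = ∑ x : {x // x ∈ s}, ((x : K) ^ ((i : ℕ) + 1)
            * (finrank K (f.maxGenEigenspace (x : K)) : K)) :=
        Fintype.sum_equiv e.symm _ _ (fun j => by simp only [v, g]; ring)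
      have h2 : ∑ x : {x // x ∈ s}, ((x : K) ^ ((i : ℕ) + 1)
            * (finrank K (f.maxGenEigenspace (x : K)) : K))
          = ∑ μ ∈ s, μ ^ ((i : ℕ) + 1) * (finrank K (f.maxGenEigenspace μ) : K) :=
        Finset.sum_coe_sort s (fun μ => μ ^ ((i : ℕ) + 1) * (finrank K (f.maxGenEigenspace μ) : K))
      rw [h1, h2]
      exact htr ((i : ℕ) + 1) (Nat.succ_pos _)
    have hvμ : μ * (finrank K (f.maxGenEigenspace μ) : K) = 0 := by
      have := congrFun hv (e ⟨μ, hμ⟩)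
      simpa [v, g, Equiv.symm_apply_apply] using this
    have hd : (finrank K (f.maxGenEigenspace μ) : K) ≠ 0 := by
      rw [Nat.cast_ne_zero]
      have hne : f.maxGenEigenspace μ ≠ ⊥ := by
        have := hμ
        rw [hs, Set.Finite.mem_toFinset] at this
        exact this
      have : Nontrivial (f.maxGenEigenspace μ) :=
        Submodule.nontrivial_iff_ne_bot.mpr hne
      exact (finrank_pos).ne'
    exact by
      rcases mul_eq_zero.mp hvμ with h0 | h0
      · exact h0
      · exact absurd h0 hd
  -- hence the generalized 0-eigenspace is everything
  have htop0 : f.maxGenEigenspace 0 = ⊤ := by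
    rw [← top_le_iff, ← htop]
    refine iSup_le fun μ => ?_
    by_cases hμ : f.maxGenEigenspace μ = ⊥
    · rw [hμ]; exact bot_le
    · have : μ = 0 := hzero μ (by simpa using hμ)
      rw [this]
  rw [Module.End.isNilpotent_iff_of_finite]
  intro m
  have hm : m ∈ f.maxGenEigenspace 0 := htop0 ▸ Submodule.mem_top
  rw [Module.End.mem_maxGenEigenspace] at hm
  obtain ⟨k, hk⟩ := hm
  exact ⟨k, by simpa using hk⟩

/-- Every element of an associative subalgebra of trace-zero endomorphisms of a
finite-dimensional real vector space is nilpotent. -/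
theorem stmt_0 (V : Type*) [AddCommGroup V] [Module ℝ V] [FiniteDimensional ℝ V]
    (A : NonUnitalSubalgebra ℝ (Module.End ℝ V))
    (htr : ∀ φ ∈ A, LinearMap.trace ℝ V φ = 0) :
    ∀ φ ∈ A, IsNilpotent φ := by
  intro φ hφ
  have hpow : ∀ k : ℕ, 0 < k → φ ^ k ∈ A := by
    intro k hk
    induction k with
    | zero => exact absurd hk (lt_irrefl 0)
    | succ m ih =>
      rcases Nat.eq_zero_or_pos m with rfl | hm
      · simpa using hφ
      · rw [pow_succ]
        exact mul_mem (ih hm) hφ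
  classical
  set b := Module.finBasis ℝ V with hb
  set E := LinearMap.toMatrixAlgEquiv b with hE
  set M := E φ with hM
  have hMtr : ∀ k : ℕ, 0 < k → (M ^ k).trace = 0 := by
    intro k hk
    rw [hM, ← map_pow]
    have h1 : LinearMap.trace ℝ V (φ ^ k) = (E (φ ^ k)).trace :=
      LinearMap.trace_eq_matrix_trace ℝ b (φ ^ k)
    rw [← h1]
    exact htr _ (hpow k hk)
  set N := M.map (algebraMap ℝ ℂ) with hN
  have hNpow : ∀ k : ℕ, N ^ k = (M ^ k).map (algebraMap ℝ ℂ) := fun k => by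
    rw [hN, ← RingHom.mapMatrix_apply, ← map_pow, RingHom.mapMatrix_apply]
  have hNtr : ∀ k : ℕ, 0 < k → (N ^ k).trace = 0 := by
    intro k hk
    rw [hNpow k]
    have := hMtr k hk
    simp only [Matrix.trace, Matrix.diag, Matrix.map_apply, ← map_sum]
    rw [show (∑ i, (M ^ k) i i) = (M ^ k).trace from rfl, this, map_zero]
  set c := Pi.basisFun ℂ (Fin (Module.finrank ℝ V)) with hc
  set F := Matrix.toLinAlgEquiv c with hF
  have hFmat : ∀ X : Matrix _ _ ℂ, LinearMap.toMatrix c c (F X) = X := fun X =>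
    LinearMap.toMatrixAlgEquiv_toLinAlgEquiv c X
  have hnil : IsNilpotent (F N) := by
    apply isNilpotent_of_forall_trace_pow_eq_zero
    intro k hk
    rw [← map_pow, LinearMap.trace_eq_matrix_trace ℂ c (F (N ^ k)), hFmat]
    exact hNtr k hk
  obtain ⟨k0, hk0⟩ := hnil
  have hNk : N ^ k0 = 0 := by
    apply F.injective
    rw [map_pow, hk0, map_zero]
  have hMk : M ^ k0 = 0 := by
    ext i j
    have := congrFun (congrFun (hNpow k0 ▸ hNk : (M ^ k0).map (algebraMap ℝ ℂ) = 0) i) j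
    simp only [Matrix.map_apply, Matrix.zero_apply] at this ⊢
    exact (algebraMap ℝ ℂ).injective (by simpa using this)
  exact ⟨k0, E.injective (by rw [map_pow, map_zero]; exact hMk)⟩
end

section
/- Let (V, ·) be a right-symmetric algebra, i.e. a bilinear product satisfying z·(y·x) − (z·y)·x = z·(x·y) − (z·x)·y for all x,y,z. Then the associative kernel K = { x ∈ V : x·(y·z) = (x·y)·z for all y,z ∈ V } is closed under the product: if x, x' ∈ K then x·x' ∈ K. -/
/-- The associative kernel of a right-symmetric algebra is closed under the product. -/
theorem stmt_5 (k V : Type*) [Field k] [AddCommGroup V] [Module k V]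
    (m : V →ₗ[k] V →ₗ[k] V)
    (hrs : ∀ x y z : V, m z (m y x) - m (m z y) x = m z (m x y) - m (m z x) y)
    (x x' : V)
    (hx : ∀ y z : V, m x (m y z) = m (m x y) z)
    (hx' : ∀ y z : V, m x' (m y z) = m (m x' y) z) :
    ∀ y z : V, m (m x x') (m y z) = m (m (m x x') y) z := by
  intro y z
  rw [← hx x' (m y z), hx' y z, hx (m x' y) z, hx x' y]
end
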